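/- Let Φ be the standard normal CDF. For all real x and all y ≥ 1: |Φ(x) - Φ(y)| ≤ 2·(1 - Φ(y))·y·|y - x|·e^{y·|y - x|}. -/

import Mathlib

open MeasureTheory

theorem normal_cdf_diff_bound (Φ : ℝ → ℝ)
    (hΦ : ∀ y : ℝ, Φ y = ∫ t in Set.Iic y, Real.exp (-t^2/2) / Real.sqrt (2 * Real.pi)) :
    ∀ x y : ℝ, 1 ≤ y →
      |Φ x - Φ y| ≤ 2 * (1 - Φ y) * y * |y - x| * Real.exp (y * |y - x|) := by
  intro x y hy
  set g : ℝ → ℝ := fun t => Real.exp (-t^2/2) / Real.sqrt (2 * Real.pi) with hgdef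
  have hy0 : (0:ℝ) < y := lt_of_lt_of_le one_pos hy
  have hπ : (0:ℝ) < Real.sqrt (2 * Real.pi) := Real.sqrt_pos.2 (by positivity)
  have hgint : Integrable g := by
    have h1 : Integrable (fun t : ℝ => Real.exp (-(1/2 : ℝ) * t ^ 2)) :=
      integrable_exp_neg_mul_sq (by norm_num)
    have h2 := h1.div_const (Real.sqrt (2 * Real.pi))
    refine h2.congr (Filter.Eventually.of_forall fun t => ?_)
    simp only [hgdef]
    ring_nf
  have htot : ∫ t, g t = 1 := by
    have h1 : ∫ t : ℝ, Real.exp (-(1/2 : ℝ) * t ^ 2) = Real.sqrt (Real.pi / (1/2)) :=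
      integral_gaussian (1/2)
    have h2 : ∫ t, g t = (∫ t : ℝ, Real.exp (-(1/2 : ℝ) * t ^ 2)) / Real.sqrt (2 * Real.pi) := by
      rw [← integral_div]
      refine integral_congr_ae (Filter.Eventually.of_forall fun t => ?_)
      simp only [hgdef]; ring_nf
    rw [h2, h1]
    rw [show Real.pi / (1/2) = 2 * Real.pi by ring]
    field_simp
  have hgpos : ∀ t, 0 ≤ g t := fun t => by
    simp only [hgdef]; positivity
  set d : ℝ := |y - x| with hddef
  have hd0 : 0 ≤ d := abs_nonneg _
  set E : ℝ := Real.exp (-y^2/2) / Real.sqrt (2 * Real.pi) with hEdef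
  have hE0 : 0 < E := by simp only [hEdef]; positivity
  -- Step A : |Φ x - Φ y| ≤ E * exp (y * d) * d
  have stepA : |Φ x - Φ y| ≤ E * Real.exp (y * d) * d := by
    have hdiff : Φ x - Φ y = ∫ t in y..x, g t := by
      rw [hΦ x, hΦ y]
      exact intervalIntegral.integral_Iic_sub_Iic hgint.integrableOn hgint.integrableOn
    have hbound : ∀ t ∈ Set.uIoc y x, ‖g t‖ ≤ E * Real.exp (y * d) := by
      intro t ht
      rcases ht with ⟨h1, h2⟩
      have hty : |t - y| ≤ d := by
        have hmin : min y x ≤ y := min_le_left _ _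
        have hmax : y ≤ max y x := le_max_left _ _
        have hmm : max y x - min y x = |y - x| := by
          rcases le_total y x with h | h
          · rw [max_eq_right h, min_eq_left h, abs_sub_comm, abs_of_nonneg (by linarith)]
          · rw [max_eq_left h, min_eq_right h, abs_of_nonneg (by linarith)]
        rw [abs_sub_le_iff]
        constructor <;> [linarith; linarith]
      have hexp : -t^2/2 ≤ -y^2/2 + y * d := by
        have h3 : -d ≤ t - y := (abs_le.1 hty).1
        have h4 : t - y ≤ d := (abs_le.1 hty).2
        nlinarith [sq_nonneg (t - y)]
      have : g t ≤ E * Real.exp (y * d) := by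
        simp only [hgdef, hEdef]
        rw [div_mul_eq_mul_div, ← Real.exp_add]
        gcongr
      calc ‖g t‖ = g t := Real.norm_of_nonneg (hgpos t)
        _ ≤ E * Real.exp (y * d) := this
    have := intervalIntegral.norm_integral_le_of_norm_le_const hbound
    rw [← hdiff] at this
    calc |Φ x - Φ y| = ‖Φ x - Φ y‖ := rfl
      _ ≤ E * Real.exp (y * d) * |x - y| := this
      _ = E * Real.exp (y * d) * d := by rw [hddef, abs_sub_comm]
  -- Step B : E / (2 * y) ≤ 1 - Φ y
  have stepB : E / (2 * y) ≤ 1 - Φ y := by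
    have hIoi : 1 - Φ y = ∫ t in Set.Ioi y, g t := by
      rw [hΦ y]
      have := intervalIntegral.integral_Iic_add_Ioi (b := y) hgint.integrableOn hgint.integrableOn
      rw [htot] at this
      linarith
    -- lower bound by integral over (y, 2y]
    have hsub : ∫ t in Set.Ioc y (2*y), g t ≤ ∫ t in Set.Ioi y, g t := by
      apply setIntegral_mono_set hgint.integrableOn
        (Filter.Eventually.of_forall hgpos)
      exact Filter.Eventually.of_forall (Set.Ioc_subset_Ioi_self)
    have hle2y : y ≤ 2 * y := by linarith
    have hIoc : ∫ t in Set.Ioc y (2*y), g t = ∫ t in y..(2*y), g t :=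
      (intervalIntegral.integral_of_le hle2y).symm
    -- compare with h t = exp(-y^2/2 - (3*y/2)*(t-y)) / sqrt (2π)
    set c : ℝ := 3 * y / 2 with hcdef
    have hc0 : 0 < c := by positivity
    have hcomp : ∫ t in y..(2*y), Real.exp (-y^2/2 - c*(t-y)) / Real.sqrt (2 * Real.pi)
        ≤ ∫ t in y..(2*y), g t := by
      apply intervalIntegral.integral_mono_on hle2y
      · apply IntervalIntegrable.div_const
        apply Continuous.intervalIntegrable
        fun_prop
      · exact hgint.intervalIntegrable
      · intro t ht
        rcases ht with ⟨h1, h2⟩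
        simp only [hgdef]
        gcongr
        nlinarith
    -- compute the lower integral
    have hFTC : ∫ t in y..(2*y), Real.exp (-c*(t-y)) = (1 - Real.exp (-c*y)) / c := by
      have hderiv : ∀ t ∈ Set.uIcc y (2*y),
          HasDerivAt (fun s => -(1/c) * Real.exp (-c*(s-y))) (Real.exp (-c*(t-y))) t := by
        intro t _
        have h1 : HasDerivAt (fun s : ℝ => -c*(s-y)) (-c) t := by
          simpa using ((hasDerivAt_id t).sub_const y).const_mul (-c)
        have h2 := (h1.exp).const_mul (-(1/c))
        refine h2.congr_deriv ?_
        have key : ∀ u : ℝ, u = -(1/c) * (u * -c) := fun u => by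
          rw [show -(1/c) * (u * -c) = (1/c*c) * u by ring, one_div_mul_cancel hc0.ne', one_mul]
        exact (key _).symm
      rw [intervalIntegral.integral_eq_sub_of_hasDerivAt hderiv
        (by apply Continuous.intervalIntegrable; fun_prop)]
      have : (2*y - y) = y := by ring
      field_simp [this]
      simp only [show (2:ℝ) - 1 = 1 by norm_num, sub_self, mul_one, mul_zero, neg_zero, Real.exp_zero]
      ring
    have hval : ∫ t in y..(2*y), Real.exp (-y^2/2 - c*(t-y)) / Real.sqrt (2 * Real.pi)
        = E * ((1 - Real.exp (-c*y)) / c) := by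
      have : ∀ t, Real.exp (-y^2/2 - c*(t-y)) / Real.sqrt (2 * Real.pi)
          = E * Real.exp (-c*(t-y)) := by
        intro t
        simp only [hEdef]
        rw [show -y^2/2 - c*(t-y) = -y^2/2 + -c*(t-y) by ring, Real.exp_add]
        ring
      simp_rw [this]
      rw [intervalIntegral.integral_const_mul, hFTC]
    -- numeric: (1 - exp(-c*y))/c ≥ 1/(2*y), i.e. exp(-3y^2/2) ≤ 1/4
    have hnum : E / (2*y) ≤ E * ((1 - Real.exp (-c*y)) / c) := by
      have hexp32 : Real.exp (-(c*y)) ≤ 1/4 := by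
        have h1 : (3:ℝ)/2 ≤ c * y := by
          simp only [hcdef]
          nlinarith
        have h2 : Real.exp (3/2) ≥ 4 := by
          have he1 : (2.7182818283:ℝ) < Real.exp 1 := Real.exp_one_gt_d9
          have he2 : (3/2:ℝ) ≤ Real.exp (1/2) := by linarith [Real.add_one_le_exp (1/2:ℝ)]
          have : Real.exp (3/2 : ℝ) = Real.exp 1 * Real.exp (1/2) := by
            rw [← Real.exp_add]; norm_num
          rw [this]
          nlinarith [Real.exp_pos (1/2 : ℝ)]
        have h3 : Real.exp (-(c*y)) ≤ Real.exp (-(3/2 : ℝ)) :=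
          Real.exp_le_exp.2 (by linarith)
        have h4 : Real.exp (-(3/2:ℝ)) = 1 / Real.exp (3/2) := by
          rw [Real.exp_neg]; ring
        rw [h4] at h3
        have : (1:ℝ) / Real.exp (3/2) ≤ 1/4 := by
          apply div_le_div_of_nonneg_left (by norm_num) (by norm_num) h2
        linarith
      have hexp32' : Real.exp (-c*y) ≤ 1/4 := by rwa [neg_mul]
      have hq : 1 / (2*y) ≤ (1 - Real.exp (-c*y)) / c := by
        rw [div_le_div_iff₀ (by positivity) hc0, hcdef]
        nlinarith [Real.exp_pos (-c*y)]
      calc E / (2*y) = E * (1/(2*y)) := by ring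
        _ ≤ E * ((1 - Real.exp (-c*y)) / c) :=
            mul_le_mul_of_nonneg_left hq hE0.le
    rw [hIoi]
    calc E / (2*y) ≤ E * ((1 - Real.exp (-c*y)) / c) := hnum
      _ = ∫ t in y..(2*y), Real.exp (-y^2/2 - c*(t-y)) / Real.sqrt (2 * Real.pi) := hval.symm
      _ ≤ ∫ t in y..(2*y), g t := hcomp
      _ = ∫ t in Set.Ioc y (2*y), g t := hIoc.symm
      _ ≤ ∫ t in Set.Ioi y, g t := hsub
  -- combine
  have hE_le : E ≤ 2 * (1 - Φ y) * y := by
    have := mul_le_mul_of_nonneg_right stepB (by positivity : (0:ℝ) ≤ 2*y)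
    rw [div_mul_cancel₀] at this
    · linarith [this]
    · positivity
  calc |Φ x - Φ y| ≤ E * Real.exp (y * d) * d := stepA
    _ = E * d * Real.exp (y * d) := by ring
    _ ≤ (2 * (1 - Φ y) * y) * d * Real.exp (y * d) := by
        apply mul_le_mul_of_nonneg_right _ (Real.exp_pos _).le
        exact mul_le_mul_of_nonneg_right hE_le hd0
    _ = 2 * (1 - Φ y) * y * |y - x| * Real.exp (y * |y - x|) := by rw [hddef]
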